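/- Let F be a field of characteristic different from 2 which satisfies Property A₂, i.e., every quaternion algebra H_F(a,b) with a, b nonzero in F is isomorphic as an F-algebra to M₂(F). Let K be any quadratic field extension of F (a field extension with dim_F(K) = 2). Then K also satisfies Property A₂: every quaternion algebra H_K(a,b) with a, b nonzero in K is isomorphic as a K-algebra to M₂(K). -/

import Mathlib

open Quaternion

lemma repOfIsotropic {k : Type*} [Field k] (h2 : (2:k) ≠ 0) {a b : k} (ha : a ≠ 0) (hb : b ≠ 0)
    {t x y z : k} (hv : ¬(t = 0 ∧ x = 0 ∧ y = 0 ∧ z = 0))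
    (heq : t^2 - a*x^2 - b*y^2 + a*b*z^2 = 0) :
    ∃ p q : k, p^2 - a*q^2 = b := by
  by_cases hsq : ∃ c : k, c^2 = a
  · obtain ⟨c, hc⟩ := hsq
    have hc0 : c ≠ 0 := by rintro rfl; rw [← hc] at ha; simp at ha
    refine ⟨(1+b)/2, (b-1)/(2*c), ?_⟩
    field_simp
    linear_combination ((b-1)^2) * hc
  · push_neg at hsq
    have hyz : y^2 - a*z^2 ≠ 0 := by
      intro h0
      rcases eq_or_ne z 0 with rfl | hz
      · have hy : y = 0 := by
          have : y^2 = 0 := by linear_combination h0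
          exact pow_eq_zero_iff (n := 2) (by norm_num) |>.mp this
        subst hy
        rcases eq_or_ne x 0 with rfl | hx
        · have ht : t = 0 := by
            have : t^2 = 0 := by linear_combination heq
            exact pow_eq_zero_iff (n := 2) (by norm_num) |>.mp this
          exact hv ⟨ht, rfl, rfl, rfl⟩
        · exact hsq (t/x) (by field_simp; linear_combination heq)
      · exact hsq (y/z) (by field_simp; linear_combination h0)
    refine ⟨(t*y + a*x*z)/(y^2 - a*z^2), (t*z + x*y)/(y^2 - a*z^2), ?_⟩
    field_simp
    linear_combination (y^2 - a*z^2) * heq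

lemma splitOfRep {k : Type*} [Field k] (h2 : (2:k) ≠ 0) {a b : k} (ha : a ≠ 0) (hb : b ≠ 0)
    {p q : k} (h : p^2 - a*q^2 = b) :
    Nonempty (ℍ[k, a, b] ≃ₐ[k] Matrix (Fin 2) (Fin 2) k) := by
  set i : Matrix (Fin 2) (Fin 2) k := !![0, 1; a, 0] with hi
  set j : Matrix (Fin 2) (Fin 2) k := !![p, q; -(a*q), -p] with hj
  have hii : i * i = a • (1 : Matrix (Fin 2) (Fin 2) k) := by
    ext x y
    fin_cases x <;> fin_cases y <;>
      simp [hi, Matrix.mul_apply, Fin.sum_univ_two, Matrix.one_apply]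
  have hjj : j * j = b • (1 : Matrix (Fin 2) (Fin 2) k) := by
    ext x y
    fin_cases x <;> fin_cases y <;>
      simp [hj, Matrix.mul_apply, Fin.sum_univ_two, Matrix.one_apply] <;>
      first | linear_combination h | linear_combination (0:k)
  have hji : j * i = -(i * j) := by
    ext x y
    fin_cases x <;> fin_cases y <;>
      simp [hi, hj, Matrix.mul_apply, Fin.sum_univ_two] <;> ring
  set B : QuaternionAlgebra.Basis (Matrix (Fin 2) (Fin 2) k) a 0 b :=
    { i := i, j := j, k := i * j
      i_mul_i := by rw [hii, zero_smul, add_zero], j_mul_j := hjj, i_mul_j := rfl,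
      j_mul_i := by rw [hji, zero_smul, zero_sub] }
  set φ := B.liftHom with hφ
  have hinj : Function.Injective φ := by
    rw [injective_iff_map_eq_zero]
    intro u hu
    have hu' : ∀ x y, (algebraMap k _ u.re + u.imI • i + u.imJ • j + u.imK • (i*j)) x y
        = (0 : Matrix (Fin 2) (Fin 2) k) x y := by
      intro x y; rw [← hu]; rfl
    have hij : i * j = !![-(a*q), -p; a*p, a*q] := by
      ext x y
      fin_cases x <;> fin_cases y <;>
        simp [hi, hj, Matrix.mul_apply, Fin.sum_univ_two] <;> ring
    have e00 := hu' 0 0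
    have e01 := hu' 0 1
    have e10 := hu' 1 0
    have e11 := hu' 1 1
    simp [hi, hj, hij, Matrix.algebraMap_matrix_apply] at e00 e01 e10 e11
    have hre : u.re = 0 := by
      have : (2:k) * u.re = 0 := by linear_combination e00 + e11
      rcases mul_eq_zero.mp this with h' | h'
      exacts [absurd h' h2, h']
    have himI : u.imI = 0 := by
      have : (2:k) * (a * u.imI) = 0 := by linear_combination a * e01 + e10
      rcases mul_eq_zero.mp this with h' | h'
      · exact absurd h' h2
      · rcases mul_eq_zero.mp h' with h'' | h''
        exacts [absurd h'' ha, h'']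
    have himJ : u.imJ = 0 := by
      have : u.imJ * b = 0 := by
        linear_combination p*e00 - (a*q)*e01 - p*hre + (a*q)*himI - u.imJ*h
      rcases mul_eq_zero.mp this with h' | h'
      exacts [h', absurd h' hb]
    have himK : u.imK = 0 := by
      have : u.imK * b = 0 := by
        linear_combination q*e00 - p*e01 - q*hre + p*himI - u.imK*h
      rcases mul_eq_zero.mp this with h' | h'
      exacts [h', absurd h' hb]
    ext <;> assumption
  have hsurj : Function.Surjective φ := by
    have hfr : Module.finrank k ℍ[k,a,b] = Module.finrank k (Matrix (Fin 2) (Fin 2) k) := by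
      rw [QuaternionAlgebra.finrank_eq_four, Module.finrank_matrix]
      simp
    exact (LinearMap.injective_iff_surjective_of_finrank_eq_finrank (f := φ.toLinearMap) hfr).mp hinj
  exact ⟨AlgEquiv.ofBijective φ ⟨hinj, hsurj⟩⟩
lemma repOfSplit {k : Type*} [Field k] (h2 : (2:k) ≠ 0) {a b : k} (ha : a ≠ 0) (hb : b ≠ 0)
    (e : ℍ[k, a, b] ≃ₐ[k] Matrix (Fin 2) (Fin 2) k) :
    ∃ p q : k, p^2 - a*q^2 = b := by
  set E : Matrix (Fin 2) (Fin 2) k := !![0,1;0,0] with hEdef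
  have hE : E ≠ 0 := by
    intro h
    have := congrFun (congrFun h 0) 1
    simp [hEdef] at this
  have hEE : E * E = 0 := by
    ext i j
    fin_cases i <;> fin_cases j <;> simp [hEdef, Matrix.mul_apply, Fin.sum_univ_two]
  set u := e.symm E with hudef
  have hu0 : u ≠ 0 := by
    intro h
    apply hE
    have := congrArg e h
    simpa [hudef] using this
  have huu : u * u = 0 := by
    rw [hudef, ← map_mul, hEE, map_zero]
  have h0 := congrArg QuaternionAlgebra.re huu
  have hI := congrArg QuaternionAlgebra.imI huu
  have hJ := congrArg QuaternionAlgebra.imJ huu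
  have hK := congrArg QuaternionAlgebra.imK huu
  simp only [QuaternionAlgebra.re_mul, QuaternionAlgebra.imI_mul, QuaternionAlgebra.imJ_mul,
    QuaternionAlgebra.imK_mul, QuaternionAlgebra.re_zero, QuaternionAlgebra.imI_zero,
    QuaternionAlgebra.imJ_zero, QuaternionAlgebra.imK_zero] at h0 hI hJ hK
  by_cases hre : u.re = 0
  · refine repOfIsotropic h2 ha hb (t := 0) (x := u.imI) (y := u.imJ) (z := u.imK) ?_ ?_
    · rintro ⟨-, h1, h2', h3⟩
      exact hu0 (by ext <;> simp [hre, h1, h2', h3])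
    · linear_combination -h0 + u.re * hre
  · exfalso
    have hmI : u.imI = 0 := by
      have : (2*u.re) * u.imI = 0 := by linear_combination hI
      rcases mul_eq_zero.mp this with h | h
      · rcases mul_eq_zero.mp h with h | h
        exacts [absurd h h2, absurd h hre]
      · exact h
    have hmJ : u.imJ = 0 := by
      have : (2*u.re) * u.imJ = 0 := by linear_combination hJ
      rcases mul_eq_zero.mp this with h | h
      · rcases mul_eq_zero.mp h with h | h
        exacts [absurd h h2, absurd h hre]
      · exact h
    have hmK : u.imK = 0 := by
      have : (2*u.re) * u.imK = 0 := by linear_combination hK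
      rcases mul_eq_zero.mp this with h | h
      · rcases mul_eq_zero.mp h with h | h
        exacts [absurd h h2, absurd h hre]
      · exact h
    apply hre
    have : u.re * u.re = 0 := by linear_combination h0 - a*u.imI*hmI - b*u.imJ*hmJ + a*b*u.imK*hmK
    rcases mul_eq_zero.mp this with h | h <;> exact h


lemma ternaryIsotropic {F : Type*} [Field F] (h2 : (2:F) ≠ 0)
    (hbin : ∀ u v r : F, u ≠ 0 → v ≠ 0 → ∃ x y : F, u*x^2 + v*y^2 = r)
    (α β γ δ ε ζ : F) :
    ∃ x y z : F, ¬(x = 0 ∧ y = 0 ∧ z = 0) ∧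
      α*x^2 + β*y^2 + γ*z^2 + δ*x*y + ε*x*z + ζ*y*z = 0 := by
  by_cases hα : α = 0
  · exact ⟨1, 0, 0, by simp, by simp [hα]⟩
  by_cases hB4 : 4*α*β - δ^2 = 0
  · refine ⟨-δ, 2*α, 0, ?_, ?_⟩
    · rintro ⟨-, h, -⟩
      rcases mul_eq_zero.mp h with h | h
      exacts [h2 h, hα h]
    · linear_combination α * hB4
  · obtain ⟨P, Q, hPQ⟩ := hbin (4*α*β - δ^2) 1 (-((4*α*γ - ε^2)*(4*α*β - δ^2) - (2*α*ζ - δ*ε)^2))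
      hB4 one_ne_zero
    refine ⟨(4*α*β - δ^2)*P - δ*(Q - (2*α*ζ - δ*ε)) - ε*(4*α*β - δ^2),
      2*α*(Q - (2*α*ζ - δ*ε)), 2*α*(4*α*β - δ^2), ?_, ?_⟩
    · rintro ⟨-, -, h⟩
      rcases mul_eq_zero.mp h with h | h
      · rcases mul_eq_zero.mp h with h | h
        exacts [h2 h, hα h]
      · exact hB4 h
    · linear_combination (α*(4*α*β - δ^2)) * hPQ

lemma normNeZero {F : Type*} [Field F] {d : F} (hnsq : ∀ c : F, c^2 ≠ d)
    {g₁ g₂ : F} (hg : ¬(g₁ = 0 ∧ g₂ = 0)) : g₁^2 - d*g₂^2 ≠ 0 := by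
  intro h
  by_cases hg2 : g₂ = 0
  · subst hg2
    have hg1 : g₁ = 0 := by
      have : g₁^2 = 0 := by linear_combination h
      exact pow_eq_zero_iff (n := 2) (by norm_num) |>.mp this
    exact hg ⟨hg1, rfl⟩
  · exact hnsq (g₁/g₂) (by field_simp; linear_combination h)

lemma lemL3 {F : Type*} [Field F] (h2 : (2:F) ≠ 0) {d : F} (hd : d ≠ 0)
    (hnsq : ∀ c : F, c^2 ≠ d)
    (hbin : ∀ u v r : F, u ≠ 0 → v ≠ 0 → ∃ x y : F, u*x^2 + v*y^2 = r)
    (g₁ g₂ : F) (hg : ¬(g₁ = 0 ∧ g₂ = 0)) :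
    ∃ u₁ u₂ : F, g₁*(u₁^2 + d*u₂^2) + 2*d*g₂*u₁*u₂ = 1 := by
  have hN : g₁^2 - d*g₂^2 ≠ 0 := normNeZero hnsq hg
  by_cases hg1 : g₁ = 0
  · have hg2 : g₂ ≠ 0 := fun h => hg ⟨hg1, h⟩
    refine ⟨1, 1/(2*d*g₂), ?_⟩
    subst hg1
    field_simp
    ring
  · obtain ⟨X, Y, hXY⟩ := hbin g₁ (d*(g₁^2 - d*g₂^2)/g₁) 1 hg1
      (by
        apply div_ne_zero (mul_ne_zero hd hN) hg1)
    refine ⟨X - g₂*d*Y/g₁, Y, ?_⟩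
    have key : g₁*((X - g₂*d*Y/g₁)^2 + d*Y^2) + 2*d*g₂*(X - g₂*d*Y/g₁)*Y
        = g₁*X^2 + d*(g₁^2 - d*g₂^2)/g₁*Y^2 := by
      field_simp
      ring
    rw [key, hXY]

lemma lemL4 {F : Type*} [Field F] {d : F} (hd : d ≠ 0) (hnsq : ∀ c : F, c^2 ≠ d)
    (g₁ g₂ u₁ u₂ : F) (hg : ¬(g₁ = 0 ∧ g₂ = 0))
    (hE : g₁*(u₁^2 + d*u₂^2) + 2*d*g₂*u₁*u₂ = 1) :
    ∃ v₁ v₂ : F, (g₁*u₁ + d*g₂*u₂)*v₁ + d*(g₁*u₂ + g₂*u₁)*v₂ = 0 ∧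
      g₁*(v₁^2 + d*v₂^2) + 2*d*g₂*v₁*v₂ ≠ 0 := by
  have hN : g₁^2 - d*g₂^2 ≠ 0 := normNeZero hnsq hg
  refine ⟨d*(g₁*u₂ + g₂*u₁), -(g₁*u₁ + d*g₂*u₂), by ring, ?_⟩
  set v₁ := d*(g₁*u₂ + g₂*u₁) with hv₁
  set v₂ := -(g₁*u₁ + d*g₂*u₂) with hv₂
  intro hc
  set z₁ := g₁*v₁ + d*g₂*v₂ with hz₁
  set z₂ := g₁*v₂ + g₂*v₁ with hz₂
  have key1 : z₁*u₁ + d*(z₂*u₂) = 0 := by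
    rw [hz₁, hz₂, hv₁, hv₂]; ring
  have key2 : z₁*v₁ + d*(z₂*v₂) = 0 := by
    rw [hz₁, hz₂]; linear_combination hc
  have hdet : u₁*v₂ - u₂*v₁ = -1 := by
    rw [hv₁, hv₂]; linear_combination -hE
  have hz10 : z₁ = 0 := by
    linear_combination -v₂*key1 + u₂*key2 + z₁*hdet
  have hz20 : z₂ = 0 := by
    have hdz : d*z₂ = 0 := by
      linear_combination -u₁*key2 + v₁*key1 + (d*z₂)*hdet
    rcases mul_eq_zero.mp hdz with h | h
    exacts [absurd h hd, h]
  have hNN : (g₁^2 - d*g₂^2)*(v₁^2 - d*v₂^2) = 0 := by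
    rw [hz₁] at hz10
    rw [hz₂] at hz20
    linear_combination (g₁*v₁ + d*g₂*v₂)*hz10 - (d*(g₁*v₂ + g₂*v₁))*hz20
  have hNv : v₁^2 - d*v₂^2 = 0 := by
    rcases mul_eq_zero.mp hNN with h | h
    exacts [absurd h hN, h]
  by_cases hv20 : v₂ = 0
  · have hv10 : v₁ = 0 := by
      have : v₁^2 = 0 := by rw [hv20] at hNv; linear_combination hNv
      exact pow_eq_zero_iff (n := 2) (by norm_num) |>.mp this
    rw [hv₁] at hv10
    rw [hv₂] at hv20
    have : (1:F) = 0 := by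
      rw [← hE]
      linear_combination u₂*hv10 - u₁*hv20
    simp at this
  · exact hnsq (v₁/v₂) (by field_simp; linear_combination hNv)

lemma quadExtStruct (F K : Type*) [Field F] [Field K] [Algebra F K]
    (hchar : (2:F) ≠ 0) (hK : Module.finrank F K = 2) :
    ∃ (s : K) (d : F), s*s = algebraMap F K d ∧
      (∀ r i : F, algebraMap F K r + algebraMap F K i * s = 0 → r = 0 ∧ i = 0) ∧
      (∀ x : K, ∃ r i : F, x = algebraMap F K r + algebraMap F K i * s) ∧
      (∀ c : F, c^2 ≠ d) := by
  set σ := algebraMap F K with hσ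
  have hθex : ∃ θ : K, θ ∉ Submodule.span F ({1} : Set K) := by
    by_contra h
    push_neg at h
    have htop : Submodule.span F ({1} : Set K) = ⊤ := Submodule.eq_top_iff'.mpr h
    have h1 : Module.finrank F K ≤ 1 := by
      have := finrank_span_le_card (R := F) ({1} : Set K)
      simp only [Set.toFinset_singleton, Finset.card_singleton] at this
      rw [htop, finrank_top] at this
      exact this
    omega
  obtain ⟨θ, hθ⟩ := hθex
  have hind : LinearIndependent F ![θ, (1:K)] := by
    rw [linearIndependent_fin2]
    refine ⟨one_ne_zero, fun a ha => hθ ?_⟩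
    rw [Submodule.mem_span_singleton]
    exact ⟨a, ha⟩
  have hcard : Fintype.card (Fin 2) = Module.finrank F K := by simp [hK]
  set B := basisOfLinearIndependentOfCardEqFinrank hind hcard with hB
  have hBcoe : ⇑B = ![θ, (1:K)] := coe_basisOfLinearIndependentOfCardEqFinrank hind hcard
  have hrepr : ∀ x : K, x = σ (B.repr x 0) * θ + σ (B.repr x 1) := by
    intro x
    conv_lhs => rw [← B.sum_repr x]
    rw [Fin.sum_univ_two, hBcoe]
    simp [Algebra.smul_def]
    rfl
  have hcoeff : ∀ r i : F, σ r * θ + σ i = 0 → r = 0 ∧ i = 0 := by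
    intro r i h
    have := Fintype.linearIndependent_iff.mp hind ![r, i] ?_
    · exact ⟨this 0, this 1⟩
    · rw [Fin.sum_univ_two]
      simpa [Algebra.smul_def] using h
  set e0 := B.repr (θ*θ) 0 with he0
  set e1 := B.repr (θ*θ) 1 with he1
  have hθθ : θ*θ = σ e0 * θ + σ e1 := hrepr (θ*θ)
  refine ⟨2*θ - σ e0, e0^2 + 4*e1, ?_, ?_, ?_, ?_⟩
  · simp only [map_add, map_mul, map_pow, map_ofNat]
    linear_combination (4:K) * hθθ
  · intro r i h
    have h' : σ (i*2) * θ + σ (r - i*e0) = 0 := by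
      simp only [map_mul, map_sub, map_ofNat]
      linear_combination h
    obtain ⟨h1, h2⟩ := hcoeff _ _ h'
    have hi : i = 0 := by
      rcases mul_eq_zero.mp h1 with h'' | h''
      · exact h''
      · exact absurd h'' (by norm_num at hchar ⊢; exact hchar)
    subst hi
    simp at h2
    exact ⟨h2, rfl⟩
  · intro x
    refine ⟨B.repr x 0 * e0 / 2 + B.repr x 1, B.repr x 0 / 2, ?_⟩
    have hx := hrepr x
    simp only [map_add, map_mul, map_div₀, map_ofNat]
    have h2K : (2:K) ≠ 0 := by
      intro h
      apply hchar
      apply (algebraMap F K).injective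
      rw [map_ofNat, map_zero, h]
    field_simp
    linear_combination (2:K) * hx
  · intro c hc
    have hfac : (2*θ - σ e0 - σ c) * (2*θ - σ e0 + σ c) = 0 := by
      have : σ (c^2) = σ (e0^2 + 4*e1) := by rw [hc]
      simp only [map_add, map_mul, map_pow, map_ofNat] at this
      linear_combination (4:K) * hθθ - this
    rcases mul_eq_zero.mp hfac with h | h
    · have h' : σ (-(e0 + c)) + σ 2 * θ = 0 := by
        simp only [map_neg, map_add, map_ofNat]
        linear_combination h
      have := hcoeff 2 (-(e0+c)) (by linear_combination h')
      exact hchar this.1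
    · have h' : σ (-(e0 - c)) + σ 2 * θ = 0 := by
        simp only [map_neg, map_sub, map_ofNat]
        linear_combination h
      have := hcoeff 2 (-(e0-c)) (by linear_combination h')
      exact hchar this.1

theorem propertyA2_quadratic_extension
    (F K : Type*) [Field F] (hchar : (2 : F) ≠ 0)
    (hF : ∀ a b : F, a ≠ 0 → b ≠ 0 →
      Nonempty (ℍ[F, a, b] ≃ₐ[F] Matrix (Fin 2) (Fin 2) F))
    [Field K] [Algebra F K] (hK : Module.finrank F K = 2) :
    ∀ a b : K, a ≠ 0 → b ≠ 0 →
      Nonempty (ℍ[K, a, b] ≃ₐ[K] Matrix (Fin 2) (Fin 2) K) := by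
  intro a b ha hb
  have hinj : Function.Injective (algebraMap F K) := (algebraMap F K).injective
  have h2K : (2:K) ≠ 0 := by
    intro h
    exact hchar (hinj (by rw [map_ofNat, map_zero]; exact h))
  have hrepF : ∀ u v : F, u ≠ 0 → v ≠ 0 → ∃ p q : F, p^2 - u*q^2 = v := by
    intro u v hu hv
    obtain ⟨e⟩ := hF u v hu hv
    exact repOfSplit hchar hu hv e
  have hbin : ∀ u v r : F, u ≠ 0 → v ≠ 0 → ∃ x y : F, u*x^2 + v*y^2 = r := by
    intro u v r hu hv
    rcases eq_or_ne r 0 with rfl | hr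
    · exact ⟨0, 0, by ring⟩
    · obtain ⟨p, q, hpq⟩ := hrepF (-v/u) (r/u) (div_ne_zero (neg_ne_zero.mpr hv) hu)
        (div_ne_zero hr hu)
      refine ⟨p, q, ?_⟩
      field_simp at hpq
      linear_combination hpq
  obtain ⟨s, d, hs2, hU, hEx, hnsq⟩ := quadExtStruct F K hchar hK
  have hd : d ≠ 0 := by
    intro h
    exact hnsq 0 (by rw [h]; ring)
  set σ : F →+* K := (algebraMap F K : F →+* K) with hσdef
  have hσ : ∀ x : F, σ x = algebraMap F K x := fun _ => rfl
  have mulCo : ∀ r i r' i' : F, (σ r + σ i * s) * (σ r' + σ i' * s)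
      = σ (r*r' + d*(i*i')) + σ (r*i' + i*r') * s := by
    intro r i r' i'
    simp only [map_add, map_mul]
    linear_combination (σ i * σ i') * hs2
  obtain ⟨a₁, a₂, hA⟩ := hEx a
  obtain ⟨b₁, b₂, hB⟩ := hEx b
  have hA0 : ¬(a₁ = 0 ∧ a₂ = 0) := by
    rintro ⟨rfl, rfl⟩
    apply ha
    rw [hA]; simp
  have hB0 : ¬(b₁ = 0 ∧ b₂ = 0) := by
    rintro ⟨rfl, rfl⟩
    apply hb
    rw [hB]; simp
  have hAB : a * b = σ (a₁*b₁ + d*(a₂*b₂)) + σ (a₁*b₂ + a₂*b₁) * s := by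
    rw [hA, hB]
    exact mulCo a₁ a₂ b₁ b₂
  have hAB0 : ¬((a₁*b₁ + d*(a₂*b₂)) = 0 ∧ (a₁*b₂ + a₂*b₁) = 0) := by
    rintro ⟨h1, h2⟩
    apply mul_ne_zero ha hb
    rw [hAB, h1, h2]; simp
  obtain ⟨u₁, u₂, Ea⟩ := lemL3 hchar hd hnsq hbin a₁ a₂ hA0
  obtain ⟨m₁, m₂, Eb⟩ := lemL3 hchar hd hnsq hbin b₁ b₂ hB0
  obtain ⟨n₁, n₂, Eab⟩ := lemL3 hchar hd hnsq hbin _ _ hAB0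
  obtain ⟨v₁, v₂, Oa, hca⟩ := lemL4 hd hnsq a₁ a₂ u₁ u₂ hA0 Ea
  obtain ⟨w₁, w₂, Ob, hcb⟩ := lemL4 hd hnsq b₁ b₂ m₁ m₂ hB0 Eb
  obtain ⟨lam, mu, E3⟩ := hbin d (-(a₁*(v₁^2 + d*v₂^2) + 2*d*a₂*v₁*v₂)) (b₁*(w₁^2 + d*w₂^2) + 2*d*b₂*w₁*w₂) hd (neg_ne_zero.mpr hca)
  obtain ⟨c₁, c₂, c₃, hc, hq⟩ := ternaryIsotropic hchar hbin
    (-(a₁*(u₁*u₂ + u₂*u₁) + a₂*(u₁*u₁ + d*(u₂*u₂)))) (((a₁*b₁ + d*(a₂*b₂))*(n₁*n₂ + n₂*n₁) + (a₁*b₂ + a₂*b₁)*(n₁*n₁ + d*(n₂*n₂))) - (b₁*(m₁*m₂ + m₂*m₁) + b₂*(m₁*m₁ + d*(m₂*m₂)))) (-(mu^2*(a₁*(v₁*v₂ + v₂*v₁) + a₂*(v₁*v₁ + d*(v₂*v₂)))) - (b₁*(w₁*w₂ + w₂*w₁) + b₂*(w₁*w₁ + d*(w₂*w₂)))) 0 (2*lam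 - 2*mu*((a₁*u₁ + d*(a₂*u₂))*v₂ + (a₁*u₂ + a₂*u₁)*v₁)) (-(2*((b₁*m₁ + d*(b₂*m₂))*w₂ + (b₁*m₂ + b₂*m₁)*w₁)))
  -- atom equations
  have hax0 : a * ((σ u₁ + σ u₂ * s)*(σ u₁ + σ u₂ * s)) = σ (a₁*(u₁*u₁ + d*(u₂*u₂)) + d*(a₂*(u₁*u₂ + u₂*u₁))) + σ (a₁*(u₁*u₂ + u₂*u₁) + a₂*(u₁*u₁ + d*(u₂*u₂))) * s := by
    rw [mulCo u₁ u₂ u₁ u₂, hA]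
    exact mulCo a₁ a₂ (u₁*u₁ + d*(u₂*u₂)) (u₁*u₂ + u₂*u₁)
  have haX0 : a * (σ u₁ + σ u₂ * s) = σ (a₁*u₁ + d*(a₂*u₂)) + σ (a₁*u₂ + a₂*u₁) * s := by
    rw [hA]
    exact mulCo a₁ a₂ u₁ u₂
  have hax0x : a * ((σ u₁ + σ u₂ * s)*(σ v₁ + σ v₂ * s)) = σ ((a₁*u₁ + d*(a₂*u₂))*v₁ + d*((a₁*u₂ + a₂*u₁)*v₂)) + σ ((a₁*u₁ + d*(a₂*u₂))*v₂ + (a₁*u₂ + a₂*u₁)*v₁) * s := by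
    rw [← mul_assoc, haX0]
    exact mulCo (a₁*u₁ + d*(a₂*u₂)) (a₁*u₂ + a₂*u₁) v₁ v₂
  have hax2 : a * ((σ v₁ + σ v₂ * s)*(σ v₁ + σ v₂ * s)) = σ (a₁*(v₁*v₁ + d*(v₂*v₂)) + d*(a₂*(v₁*v₂ + v₂*v₁))) + σ (a₁*(v₁*v₂ + v₂*v₁) + a₂*(v₁*v₁ + d*(v₂*v₂))) * s := by
    rw [mulCo v₁ v₂ v₁ v₂, hA]
    exact mulCo a₁ a₂ (v₁*v₁ + d*(v₂*v₂)) (v₁*v₂ + v₂*v₁)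
  have hby0 : b * ((σ m₁ + σ m₂ * s)*(σ m₁ + σ m₂ * s)) = σ (b₁*(m₁*m₁ + d*(m₂*m₂)) + d*(b₂*(m₁*m₂ + m₂*m₁))) + σ (b₁*(m₁*m₂ + m₂*m₁) + b₂*(m₁*m₁ + d*(m₂*m₂))) * s := by
    rw [mulCo m₁ m₂ m₁ m₂, hB]
    exact mulCo b₁ b₂ (m₁*m₁ + d*(m₂*m₂)) (m₁*m₂ + m₂*m₁)
  have hbY0 : b * (σ m₁ + σ m₂ * s) = σ (b₁*m₁ + d*(b₂*m₂)) + σ (b₁*m₂ + b₂*m₁) * s := by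
    rw [hB]
    exact mulCo b₁ b₂ m₁ m₂
  have hby0y : b * ((σ m₁ + σ m₂ * s)*(σ w₁ + σ w₂ * s)) = σ ((b₁*m₁ + d*(b₂*m₂))*w₁ + d*((b₁*m₂ + b₂*m₁)*w₂)) + σ ((b₁*m₁ + d*(b₂*m₂))*w₂ + (b₁*m₂ + b₂*m₁)*w₁) * s := by
    rw [← mul_assoc, hbY0]
    exact mulCo (b₁*m₁ + d*(b₂*m₂)) (b₁*m₂ + b₂*m₁) w₁ w₂
  have hby2 : b * ((σ w₁ + σ w₂ * s)*(σ w₁ + σ w₂ * s)) = σ (b₁*(w₁*w₁ + d*(w₂*w₂)) + d*(b₂*(w₁*w₂ + w₂*w₁))) + σ (b₁*(w₁*w₂ + w₂*w₁) + b₂*(w₁*w₁ + d*(w₂*w₂))) * s := by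
    rw [mulCo w₁ w₂ w₁ w₂, hB]
    exact mulCo b₁ b₂ (w₁*w₁ + d*(w₂*w₂)) (w₁*w₂ + w₂*w₁)
  have habz : (a*b) * ((σ n₁ + σ n₂ * s)*(σ n₁ + σ n₂ * s)) = σ ((a₁*b₁ + d*(a₂*b₂))*(n₁*n₁ + d*(n₂*n₂)) + d*((a₁*b₂ + a₂*b₁)*(n₁*n₂ + n₂*n₁))) + σ ((a₁*b₁ + d*(a₂*b₂))*(n₁*n₂ + n₂*n₁) + (a₁*b₂ + a₂*b₁)*(n₁*n₁ + d*(n₂*n₂))) * s := by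
    rw [mulCo n₁ n₂ n₁ n₂, hAB]
    exact mulCo (a₁*b₁ + d*(a₂*b₂)) (a₁*b₂ + a₂*b₁) (n₁*n₁ + d*(n₂*n₂)) (n₁*n₂ + n₂*n₁)
  -- mapped F-facts
  have EaK := congrArg σ Ea
  have EbK := congrArg σ Eb
  have EabK := congrArg σ Eab
  have OaK := congrArg σ Oa
  have ObK := congrArg σ Ob
  have E3K := congrArg σ E3
  have E4K := congrArg σ hq
  simp only [map_add, map_mul, map_pow, map_neg, map_sub, map_one, map_zero, map_ofNat]
    at EaK EbK EabK OaK ObK E3K E4K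
  have heq : (σ c₁ + σ (c₃*lam) * s)^2 - a*(σ c₁ * (σ u₁ + σ u₂ * s) + σ (c₃*mu) * (σ v₁ + σ v₂ * s))^2 - b*(σ c₂ * (σ m₁ + σ m₂ * s) + σ c₃ * (σ w₁ + σ w₂ * s))^2 + a*b*(σ c₂ * (σ n₁ + σ n₂ * s))^2 = 0 := by
    have expand : (σ c₁ + σ (c₃*lam) * s)^2 - a*(σ c₁ * (σ u₁ + σ u₂ * s) + σ (c₃*mu) * (σ v₁ + σ v₂ * s))^2 - b*(σ c₂ * (σ m₁ + σ m₂ * s) + σ c₃ * (σ w₁ + σ w₂ * s))^2 + a*b*(σ c₂ * (σ n₁ + σ n₂ * s))^2 = (σ c₁ + σ (c₃*lam) * s)*(σ c₁ + σ (c₃*lam) * s) - ((σ c₁)^2*(a*((σ u₁ + σ u₂ * s)*(σ u₁ + σ u₂ * s))) + (2*(σ c₁*σ (c₃*mu)))*(a*((σ u₁ + σ u₂ * s)*(σ v₁ + σ v₂ * s))) + (σ (c₃*mu))^2*(a*((σ v₁ + σ v₂ * s)*(σ v₁ + σ v₂ * s)))) - ((σ c₂)^2*(b*((σ m₁ + σ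 m₂ * s)*(σ m₁ + σ m₂ * s))) + (2*(σ c₂*σ c₃))*(b*((σ m₁ + σ m₂ * s)*(σ w₁ + σ w₂ * s))) + (σ c₃)^2*(b*((σ w₁ + σ w₂ * s)*(σ w₁ + σ w₂ * s)))) + (σ c₂)^2*((a*b)*((σ n₁ + σ n₂ * s)*(σ n₁ + σ n₂ * s))) := by ring
    rw [expand, mulCo c₁ (c₃*lam) c₁ (c₃*lam), hax0, hax0x, hax2, hby0, hby0y, hby2, habz]
    simp only [map_add, map_mul, map_pow, map_neg, map_sub, map_one, map_zero, map_ofNat]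
    linear_combination (-(σ c₁)^2) * EaK - (2*(σ c₁*σ c₃*σ mu)) * OaK - (σ c₂)^2 * EbK -
      (2*(σ c₂*σ c₃)) * ObK + (σ c₂)^2 * EabK + (σ c₃)^2 * E3K + s * E4K
  have hZ0 : (σ n₁ + σ n₂ * s) ≠ 0 := by
    intro h0
    obtain ⟨hn1, hn2⟩ := hU n₁ n₂ h0
    rw [hn1, hn2] at Eab
    simp at Eab
  have hYp : (σ w₁ + σ w₂ * s) ≠ 0 := by
    intro h0
    obtain ⟨hw1, hw2⟩ := hU w₁ w₂ h0
    apply hcb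
    rw [hw1, hw2]; ring
  have hv : ¬((σ c₁ + σ (c₃*lam) * s) = 0 ∧ (σ c₁ * (σ u₁ + σ u₂ * s) + σ (c₃*mu) * (σ v₁ + σ v₂ * s)) = 0 ∧ (σ c₂ * (σ m₁ + σ m₂ * s) + σ c₃ * (σ w₁ + σ w₂ * s)) = 0 ∧ (σ c₂ * (σ n₁ + σ n₂ * s)) = 0) := by
    rintro ⟨hT, hXe, hYe, hZe⟩
    obtain ⟨hc₁, hc₃l⟩ := hU c₁ (c₃*lam) hT
    have hc₂ : c₂ = 0 := by
      rcases mul_eq_zero.mp hZe with h0 | h0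
      · have : σ c₂ = σ 0 := by rw [map_zero]; exact h0
        exact hinj this
      · exact absurd h0 hZ0
    have hc₃ : c₃ = 0 := by
      rw [hc₂, map_zero, zero_mul, zero_add] at hYe
      rcases mul_eq_zero.mp hYe with h0 | h0
      · have : σ c₃ = σ 0 := by rw [map_zero]; exact h0
        exact hinj this
      · exact absurd h0 hYp
    exact hc ⟨hc₁, hc₂, hc₃⟩
  obtain ⟨p, q, hpq⟩ := repOfIsotropic h2K ha hb hv heq
  exact splitOfRep h2K ha hb hpq
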